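/- Let V be a positive random variable and α > 0. If there exists C₁ > 0 such that log P(V ≤ t) ≤ -C₁ t^{-α} for all t > 0, then there exists C₂ > 0 such that log E[e^{-λ V}] ≤ -C₂ λ^{α/(1+α)} for all λ > 1. -/

import Mathlib

open MeasureTheory

/-- If `log P(V ≤ t) ≤ -C₁ t^{-α}` for all `t > 0`, then
`log E[e^{-λV}] ≤ -C₂ λ^{α/(1+α)}` for all `λ > 1`. -/
theorem log_laplace_of_log_tail {Ω : Type*} [MeasurableSpace Ω] (μ : Measure Ω)
    [IsProbabilityMeasure μ] (V : Ω → ℝ) (hVm : Measurable V) (hV : ∀ ω, 0 < V ω)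
    (α : ℝ) (hα : 0 < α)
    (h : ∃ C₁ > 0, ∀ t > 0, Real.log (μ {ω | V ω ≤ t}).toReal ≤ -C₁ * t ^ (-α)) :
    ∃ C₂ > 0, ∀ l > 1, Real.log (∫ ω, Real.exp (-l * V ω) ∂μ) ≤
      -C₂ * l ^ (α / (1 + α)) := by
  obtain ⟨C₁, hC₁, hP⟩ := h
  -- measurability and integrability
  have hmeas : ∀ l : ℝ, Measurable fun ω => Real.exp (-l * V ω) := fun l =>
    Real.measurable_exp.comp (hVm.const_mul (-l))
  have hint : ∀ l : ℝ, 0 ≤ l → Integrable (fun ω => Real.exp (-l * V ω)) μ := by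
    intro l hl
    refine (integrable_const (1:ℝ)).mono' (hmeas l).aestronglyMeasurable
      (ae_of_all _ fun ω => ?_)
    rw [Real.norm_eq_abs, abs_of_pos (Real.exp_pos _)]
    exact Real.exp_le_one_iff.mpr (by nlinarith [(hV ω).le])
  have hpos : ∀ l : ℝ, 0 ≤ l → 0 < ∫ ω, Real.exp (-l * V ω) ∂μ := by
    intro l hl
    rw [integral_pos_iff_support_of_nonneg_ae
      (ae_of_all _ fun ω => (Real.exp_pos _).le) (hint l hl)]
    have hsupp : (Function.support fun ω => Real.exp (-l * V ω)) = Set.univ :=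
      Set.eq_univ_of_forall fun ω => (Real.exp_pos _).ne'
    rw [hsupp]
    simp
  -- tail bound in exponential form
  have hPexp : ∀ t > 0, (μ {ω | V ω ≤ t}).toReal ≤ Real.exp (-C₁ * t ^ (-α)) := by
    intro t ht
    rcases eq_or_lt_of_le (ENNReal.toReal_nonneg (a := μ {ω | V ω ≤ t})) with h0 | h0
    · rw [← h0]; exact (Real.exp_pos _).le
    · calc (μ {ω | V ω ≤ t}).toReal
          = Real.exp (Real.log (μ {ω | V ω ≤ t}).toReal) := (Real.exp_log h0).symm
        _ ≤ Real.exp (-C₁ * t ^ (-α)) := Real.exp_le_exp.mpr (hP t ht)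
  -- splitting bound
  have hsplit : ∀ l > 0, ∀ t > 0, (∫ ω, Real.exp (-l * V ω) ∂μ) ≤
      (μ {ω | V ω ≤ t}).toReal + Real.exp (-l * t) := by
    intro l hl t ht
    have hA : MeasurableSet {ω | V ω ≤ t} := hVm measurableSet_Iic
    have hind : Integrable ({ω | V ω ≤ t}.indicator fun _ => (1:ℝ)) μ :=
      (integrable_const (1:ℝ)).indicator hA
    have hg : Integrable (fun ω => ({ω | V ω ≤ t}.indicator fun _ => (1:ℝ)) ω
        + Real.exp (-l * t)) μ := hind.add (integrable_const _)
    have hle : ∀ ω, Real.exp (-l * V ω) ≤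
        ({ω | V ω ≤ t}.indicator fun _ => (1:ℝ)) ω + Real.exp (-l * t) := by
      intro ω
      by_cases hω : ω ∈ {ω | V ω ≤ t}
      · rw [Set.indicator_of_mem hω]
        have h1 : Real.exp (-l * V ω) ≤ 1 :=
          Real.exp_le_one_iff.mpr (by nlinarith [hV ω])
        linarith [(Real.exp_pos (-l * t)).le]
      · rw [Set.indicator_of_notMem hω, zero_add]
        have hω' : t < V ω := not_le.mp hω
        exact Real.exp_le_exp.mpr (by nlinarith)
    calc (∫ ω, Real.exp (-l * V ω) ∂μ)
        ≤ ∫ ω, (({ω | V ω ≤ t}.indicator fun _ => (1:ℝ)) ω + Real.exp (-l * t)) ∂μ :=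
          integral_mono (hint l hl.le) hg hle
      _ = (μ {ω | V ω ≤ t}).toReal + Real.exp (-l * t) := by
          rw [integral_add hind (integrable_const _), integral_indicator_const _ hA,
            integral_const]
          simp
          rfl
  -- the value at l = 1 is strictly less than 1
  have hm_int : Integrable (fun ω => Real.exp (-1 * V ω)) μ := hint 1 one_pos.le
  have hm_pos : 0 < ∫ ω, Real.exp (-1 * V ω) ∂μ := hpos 1 one_pos.le
  have hm_lt : (∫ ω, Real.exp (-1 * V ω) ∂μ) < 1 := by
    have hsub : Integrable (fun ω => 1 - Real.exp (-1 * V ω)) μ := by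
      exact (integrable_const (1:ℝ)).sub hm_int
    have hkey : 0 < ∫ ω, (1 - Real.exp (-1 * V ω)) ∂μ := by
      rw [integral_pos_iff_support_of_nonneg_ae
        (ae_of_all _ fun ω => by
          have h1 : Real.exp (-1 * V ω) ≤ 1 :=
            Real.exp_le_one_iff.mpr (by nlinarith [hV ω])
          simp only [Pi.zero_apply]
          linarith) hsub]
      have hsupp : (Function.support fun ω => 1 - Real.exp (-1 * V ω)) = Set.univ :=
        Set.eq_univ_of_forall fun ω => by
          have h1 : Real.exp (-1 * V ω) < 1 := by
            rw [Real.exp_lt_one_iff]; nlinarith [hV ω]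
          exact Function.mem_support.mpr (sub_ne_zero.mpr (ne_of_gt h1))
      rw [hsupp]
      simp
    rw [integral_sub (integrable_const (1:ℝ)) hm_int, integral_const] at hkey
    simp only [Measure.real, measure_univ, ENNReal.toReal_one, smul_eq_mul, one_mul, mul_one] at hkey
    linarith
  -- monotonicity in l
  have hmono : ∀ l : ℝ, 1 ≤ l →
      (∫ ω, Real.exp (-l * V ω) ∂μ) ≤ ∫ ω, Real.exp (-1 * V ω) ∂μ := by
    intro l hl
    exact integral_mono (hint l (by linarith)) hm_int fun ω =>
      Real.exp_le_exp.mpr (by nlinarith [hV ω])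
  -- constants
  set c : ℝ := min C₁ 1 with hc_def
  have hc : 0 < c := lt_min hC₁ one_pos
  set ε : ℝ := -Real.log (∫ ω, Real.exp (-1 * V ω) ∂μ) with hε_def
  have hε : 0 < ε := by
    have := Real.log_neg hm_pos hm_lt
    simp only [hε_def]
    linarith
  set S : ℝ := max 1 (2 * Real.log 2 / c) with hS_def
  have hS : 0 < S := lt_of_lt_of_le one_pos (le_max_left _ _)
  refine ⟨min (c / 2) (ε / S), lt_min (by linarith) (div_pos hε hS), ?_⟩
  intro l hl
  have hl0 : (0:ℝ) < l := by linarith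
  set s : ℝ := l ^ (α / (1 + α)) with hs_def
  have hexp_pos : 0 < α / (1 + α) := div_pos hα (by linarith)
  have hs1 : 1 < s := Real.one_lt_rpow_iff_of_pos hl0 |>.mpr (Or.inl ⟨hl, hexp_pos⟩)
  set t : ℝ := l ^ (-(1 + α)⁻¹) with ht_def
  have ht : 0 < t := Real.rpow_pos_of_pos hl0 _
  have hlt : l * t = s := by
    rw [ht_def, hs_def]
    nth_rewrite 1 [← Real.rpow_one l]
    rw [← Real.rpow_add hl0]
    congr 1
    have h1α : (1:ℝ) + α ≠ 0 := by positivity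
    field_simp
    ring
  have htα : t ^ (-α) = s := by
    rw [ht_def, hs_def, ← Real.rpow_mul hl0.le]
    congr 1
    field_simp
  -- main estimate
  have hEbound : (∫ ω, Real.exp (-l * V ω) ∂μ) ≤ 2 * Real.exp (-c * s) := by
    have h1 : (∫ ω, Real.exp (-l * V ω) ∂μ) ≤ Real.exp (-C₁ * s) + Real.exp (-s) := by
      calc (∫ ω, Real.exp (-l * V ω) ∂μ)
          ≤ (μ {ω | V ω ≤ t}).toReal + Real.exp (-l * t) := hsplit l hl0 t ht
        _ ≤ Real.exp (-C₁ * t ^ (-α)) + Real.exp (-l * t) :=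
            add_le_add_left (hPexp t ht) _
        _ = Real.exp (-C₁ * s) + Real.exp (-s) := by
            rw [htα]; congr 1; rw [neg_mul, hlt]
    have hcC : c ≤ C₁ := min_le_left _ _
    have hc1 : c ≤ 1 := min_le_right _ _
    have hs0 : 0 < s := by linarith
    have e1 : Real.exp (-C₁ * s) ≤ Real.exp (-c * s) :=
      Real.exp_le_exp.mpr (by nlinarith)
    have e2 : Real.exp (-s) ≤ Real.exp (-c * s) :=
      Real.exp_le_exp.mpr (by nlinarith)
    linarith
  have hlogA : Real.log (∫ ω, Real.exp (-l * V ω) ∂μ) ≤ Real.log 2 - c * s := by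
    have := Real.log_le_log (hpos l hl0.le) hEbound
    rwa [Real.log_mul two_ne_zero (Real.exp_ne_zero _), Real.log_exp, neg_mul,
      ← sub_eq_add_neg] at this
  have hlogB : Real.log (∫ ω, Real.exp (-l * V ω) ∂μ) ≤ -ε := by
    have := Real.log_le_log (hpos l hl0.le) (hmono l hl.le)
    simp only [hε_def]
    linarith
  -- case analysis
  by_cases hcase : 2 * Real.log 2 / c ≤ s
  · have h2s : 2 * Real.log 2 ≤ s * c := (div_le_iff₀ hc).mp hcase
    have hC₂ : min (c / 2) (ε / S) ≤ c / 2 := min_le_left _ _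
    have hs0 : (0:ℝ) < s := by linarith
    nlinarith
  · have hsS : s ≤ S := le_trans (not_le.mp hcase).le (le_max_right _ _)
    have hC₂ : min (c / 2) (ε / S) ≤ ε / S := min_le_right _ _
    have hmc : (ε / S) * S = ε := div_mul_cancel₀ ε hS.ne'
    have hs0 : (0:ℝ) < s := by linarith
    have hεS : 0 ≤ ε / S := (div_pos hε hS).le
    nlinarith
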